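/- As formal power series in q: 1/(q;q)_∞ · Σ_{n₁,n₂≥1} (q;q)_{n₁-1}²(q;q)_{n₂-1}² q^{n₁+n₂}/((q;q)_{n₁}(q;q)_{n₂}(q;q)_{n₁+n₂}) = Σ_{n₁≥1} [q^{n₁}/(1-q^{n₁})² · 1/(q^{n₁+1};q)_∞] · Σ_{n₂≥1} [q^{n₂}/(1-q^{n₂})² · 1/((1-q^{n₂+1})⋯(1-q^{n₂+n₁}))]. -/

import Mathlib

open scoped BigOperators

/-- The finite q-Pochhammer symbol `(x;q)_n = ∏_{k=0}^{n-1} (1 - x q^k)`. -/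
noncomputable def qPoch (x q : ℂ) (n : ℕ) : ℂ := ∏ k ∈ Finset.range n, (1 - x * q ^ k)

/-- The infinite q-Pochhammer symbol `(x;q)_∞ = ∏_{k≥0} (1 - x q^k)`. -/
noncomputable def qPochInf (x q : ℂ) : ℂ := ∏' k : ℕ, (1 - x * q ^ k)

/-- `p(n)`, the number of partitions of `n`. -/
def partitionCount (n : ℕ) : ℕ := Fintype.card (Nat.Partition n)

/-- The smallest part of a partition (0 for the empty partition). -/
def minPart {n : ℕ} (P : Nat.Partition n) : ℕ := (P.parts.sort (· ≤ ·)).headD 0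

/-- The rank of a partition: largest part minus number of parts. -/
def rank {n : ℕ} (P : Nat.Partition n) : ℤ := (P.parts.sup : ℤ) - P.parts.card

/-- `N(m,n)`, the number of partitions of `n` with rank `m`. -/
def rankCount (m : ℤ) (n : ℕ) : ℕ := Fintype.card {P : Nat.Partition n // rank P = m}

/-- Dyson's crank of a partition. -/
def crank {n : ℕ} (P : Nat.Partition n) : ℤ :=
  let ω := P.parts.count 1
  if ω = 0 then (P.parts.sup : ℤ)
  else ((P.parts.filter (fun x => ω < x)).card : ℤ) - ω

/-- `M(m,n)`, the number of partitions of `n` with crank `m`. -/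
def crankCount (m : ℤ) (n : ℕ) : ℕ := Fintype.card {P : Nat.Partition n // crank P = m}

/-- `spt(n)`: total number of appearances of the smallest part in all partitions of `n`. -/
def spt (n : ℕ) : ℕ := ∑ P : Nat.Partition n, P.parts.count (minPart P)

lemma aux_ne {q : ℂ} (hq : ‖q‖ < 1) (m : ℕ) : 1 - q ^ (m + 1) ≠ 0 := by
  intro h
  have h1 : q ^ (m + 1) = 1 := by linear_combination -h
  have h2 : ‖q ^ (m + 1)‖ < 1 := by
    rw [norm_pow]; exact pow_lt_one₀ (norm_nonneg q) hq (Nat.succ_ne_zero m)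
  rw [h1, norm_one] at h2
  exact lt_irrefl 1 h2

lemma qPoch_q_ne {q : ℂ} (hq : ‖q‖ < 1) (n : ℕ) : qPoch q q n ≠ 0 := by
  unfold qPoch
  apply Finset.prod_ne_zero_iff.2
  intro k _
  have h : q * q ^ k = q ^ (k + 1) := by ring
  rw [h]; exact aux_ne hq k

lemma mult_aux {q : ℂ} (hq : ‖q‖ < 1) (m : ℕ) :
    Multipliable (fun k : ℕ => 1 - q ^ (k + m + 1)) := by
  apply Complex.multipliable_of_summable_log
  have hs : Summable (fun k : ℕ => ((1 - ‖q‖)⁻¹ / 2 + 1) * ‖q‖ ^ k) :=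
    (summable_geometric_of_lt_one (norm_nonneg q) hq).mul_left _
  apply Summable.of_norm_bounded hs
  intro k
  have hqn : (0:ℝ) ≤ ‖q‖ := norm_nonneg q
  have hs1 : ‖q‖ ^ (k + m + 1) ≤ ‖q‖ ^ k :=
    pow_le_pow_of_le_one hqn hq.le (by omega)
  have hs2 : ‖q‖ ^ (k + m + 1) < 1 := pow_lt_one₀ hqn hq (by omega)
  have hs0 : (0:ℝ) ≤ ‖q‖ ^ (k + m + 1) := pow_nonneg hqn _
  have hzk : ‖-q ^ (k + m + 1)‖ < 1 := by rwa [norm_neg, norm_pow]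
  have h1 : (1 : ℂ) - q ^ (k + m + 1) = 1 + -q ^ (k + m + 1) := by ring
  show ‖Complex.log (1 - q ^ (k + m + 1))‖ ≤ _
  rw [h1]
  have hb := Complex.norm_log_one_add_le hzk
  rw [norm_neg, norm_pow] at hb
  set s := ‖q‖ ^ (k + m + 1) with hsdef
  have hg0 : (0:ℝ) ≤ ‖q‖ ^ k := pow_nonneg hqn _
  have ht : (1 - s)⁻¹ ≤ (1 - ‖q‖)⁻¹ := by
    apply inv_anti₀ (by linarith)
    have : ‖q‖ ≤ s ∨ s ≤ ‖q‖ := le_total _ _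
    have hsq : s ≤ ‖q‖ := by
      have : ‖q‖ ^ (k + m + 1) ≤ ‖q‖ ^ 1 := pow_le_pow_of_le_one hqn hq.le (by omega)
      simpa using this
    linarith
  have ht0 : (0:ℝ) ≤ (1 - s)⁻¹ := inv_nonneg.2 (by linarith)
  have hT0 : (0:ℝ) ≤ (1 - ‖q‖)⁻¹ := inv_nonneg.2 (by linarith)
  have key : s ^ 2 * (1 - s)⁻¹ / 2 + s ≤ ((1 - ‖q‖)⁻¹ / 2 + 1) * ‖q‖ ^ k := by
    have h2 : s ^ 2 ≤ s := by nlinarith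
    have h3 : s ^ 2 * (1 - s)⁻¹ ≤ ‖q‖ ^ k * (1 - ‖q‖)⁻¹ := by
      apply mul_le_mul (le_trans h2 hs1) ht ht0 hg0
    nlinarith
  exact le_trans hb key

lemma pochinf_split {q : ℂ} (hq : ‖q‖ < 1) (m : ℕ) :
    qPochInf q q = qPoch q q m * qPochInf (q ^ (m + 1)) q := by
  unfold qPochInf qPoch
  have hmult : Multipliable (fun n : ℕ => 1 - q * q ^ (n + m)) := by
    have := mult_aux hq m
    apply this.congr
    intro k; congr 1; ring
  have h := Multipliable.prod_mul_tprod_nat_mul' (f := fun k : ℕ => 1 - q * q ^ k) (k := m) hmult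
  rw [← h]
  congr 1
  apply tprod_congr
  intro k
  congr 1
  ring

lemma qPoch_split (q : ℂ) (a b : ℕ) :
    qPoch q q (a + b) = qPoch q q b * qPoch (q ^ (b + 1)) q a := by
  unfold qPoch
  rw [add_comm a b, Finset.prod_range_add]
  congr 1
  apply Finset.prod_congr rfl
  intro k _
  congr 1
  ring

lemma term_eq (X Y J Z u v qa qb : ℂ) (hX : X ≠ 0) (hY : Y ≠ 0) (hu : u ≠ 0)
    (hv : v ≠ 0) (hZ : Z ≠ 0) (hJ : J ≠ 0) :
    (1 / (X * u * J)) * (X ^ 2 * Y ^ 2 * (qa * qb) / ((X * u) * (Y * v) * ((Y * v) * Z))) =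
    (qa / u ^ 2) * (1 / J) * ((qb / v ^ 2) * (1 / Z)) := by
  have h1 : (1 / (X * u * J)) * (X ^ 2 * Y ^ 2 * (qa * qb) / ((X * u) * (Y * v) * ((Y * v) * Z)))
      = (1 * (X ^ 2 * Y ^ 2 * (qa * qb))) / ((X * u * J) * ((X * u) * (Y * v) * ((Y * v) * Z))) :=
    div_mul_div_comm _ _ _ _
  have h2 : (qa / u ^ 2) * (1 / J) * ((qb / v ^ 2) * (1 / Z))
      = ((qa * 1) * (qb * 1)) / ((u ^ 2 * J) * (v ^ 2 * Z)) := by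
    rw [div_mul_div_comm, div_mul_div_comm, div_mul_div_comm]
  rw [h1, h2, div_eq_div_iff
    (mul_ne_zero (mul_ne_zero (mul_ne_zero hX hu) hJ)
      (mul_ne_zero (mul_ne_zero (mul_ne_zero hX hu) (mul_ne_zero hY hv))
        (mul_ne_zero (mul_ne_zero hY hv) hZ)))
    (mul_ne_zero (mul_ne_zero (pow_ne_zero 2 hu) hJ)
      (mul_ne_zero (pow_ne_zero 2 hv) hZ))]
  ring

/-- Rearrangement of the double series into the `spt`-type product form. -/
theorem double_series_rearrangement (q : ℂ) (hq : ‖q‖ < 1) :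
    (1 / qPochInf q q) *
        ∑' n₁ : ℕ, ∑' n₂ : ℕ,
          (qPoch q q n₁) ^ 2 * (qPoch q q n₂) ^ 2 * q ^ (n₁ + 1 + (n₂ + 1)) /
            (qPoch q q (n₁ + 1) * qPoch q q (n₂ + 1) * qPoch q q (n₁ + 1 + (n₂ + 1))) =
      ∑' n₁ : ℕ,
        (q ^ (n₁ + 1) / (1 - q ^ (n₁ + 1)) ^ 2) * (1 / qPochInf (q ^ (n₁ + 2)) q) *
          ∑' n₂ : ℕ,
            (q ^ (n₂ + 1) / (1 - q ^ (n₂ + 1)) ^ 2) *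
              (1 / qPoch (q ^ (n₂ + 2)) q (n₁ + 1)) := by
  rw [← tsum_mul_left]
  refine tsum_congr fun n₁ => ?_
  rw [← tsum_mul_left, ← tsum_mul_left]
  refine tsum_congr fun n₂ => ?_
  have hPI : qPochInf q q = qPoch q q (n₁ + 1) * qPochInf (q ^ (n₁ + 2)) q :=
    pochinf_split hq (n₁ + 1)
  have hsplit : qPoch q q (n₁ + 1 + (n₂ + 1)) =
      qPoch q q (n₂ + 1) * qPoch (q ^ (n₂ + 2)) q (n₁ + 1) := qPoch_split q (n₁ + 1) (n₂ + 1)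
  have hP1 : qPoch q q (n₁ + 1) = qPoch q q n₁ * (1 - q ^ (n₁ + 1)) := by
    unfold qPoch
    rw [Finset.prod_range_succ]
    congr 2
    ring
  have hP2 : qPoch q q (n₂ + 1) = qPoch q q n₂ * (1 - q ^ (n₂ + 1)) := by
    unfold qPoch
    rw [Finset.prod_range_succ]
    congr 2
    ring
  have hX : qPoch q q n₁ ≠ 0 := qPoch_q_ne hq n₁
  have hY : qPoch q q n₂ ≠ 0 := qPoch_q_ne hq n₂
  have hu : (1 - q ^ (n₁ + 1)) ≠ 0 := aux_ne hq n₁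
  have hv : (1 - q ^ (n₂ + 1)) ≠ 0 := aux_ne hq n₂
  have hZ : qPoch (q ^ (n₂ + 2)) q (n₁ + 1) ≠ 0 := by
    intro h
    apply qPoch_q_ne hq (n₁ + 1 + (n₂ + 1))
    rw [hsplit, h, mul_zero]
  rcases eq_or_ne (qPochInf (q ^ (n₁ + 2)) q) 0 with hJ | hJ
  · rw [hPI, hJ]
    simp
  · rw [show q ^ (n₁ + 1 + (n₂ + 1)) = q ^ (n₁ + 1) * q ^ (n₂ + 1) from pow_add q _ _,
      hPI, hsplit, hP1, hP2]
    exact term_eq _ _ _ _ _ _ _ _ hX hY hu hv hZ hJ
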